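/- Let Ω ⊆ ℝ be an open interval, g : Ω → (0,∞) a C¹ function, and ξ : Ω × (0,1) → ℝ a function that is C¹ in θ and nowhere zero. Then: (i) for each fixed α ∈ (0,1), a positive C¹ function π : Ω → (0,∞) satisfies d/dθ{g(θ)^{−1}ξ(θ,α)π(θ)} = 0 if and only if π(θ) = c·g(θ)/ξ(θ,α) for some nonzero constant c; and (ii) there exists a positive C¹ function π, not depending on α, satisfying d/dθ{g(θ)^{−1}ξ(θ,α)π(θ)} = 0 for every α ∈ (0,1) — i.e., a uniformly predictive matching prior exists — if and only if ξ factorizes as ξ(θ,α) = Q(θ)R(α) for some functions Q : Ω → ℝ and R : (0,1) → ℝ. -/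

import Mathlib

open MeasureTheory Set

/-- Scalar-parameter highest predictive density region matching.
Let `Ω ⊆ ℝ` be an open interval, `g : Ω → (0,∞)` C¹, and `ξ(θ,α)` C¹ in `θ` and nowhere
zero.  Then: (i) for each fixed `α ∈ (0,1)`, a positive C¹ function `π` satisfies
`d/dθ{g⁻¹ξπ} = 0` iff `π = c·g/ξ(·,α)` for some nonzero constant `c`; and (ii) a
uniformly predictive matching prior (one `π` matching for every `α`) exists iff `ξ`
factorizes as `ξ(θ,α) = Q(θ)R(α)`. -/
theorem stmt_12 (Ω : Set ℝ) (hΩopen : IsOpen Ω) (hΩconn : IsPreconnected Ω)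
    (hΩne : Ω.Nonempty)
    (g : ℝ → ℝ) (hgC1 : ContDiffOn ℝ 1 g Ω) (hgpos : ∀ θ ∈ Ω, 0 < g θ)
    (ξ : ℝ → ℝ → ℝ)
    (hξC1 : ∀ α ∈ Set.Ioo (0:ℝ) 1, ContDiffOn ℝ 1 (fun θ => ξ θ α) Ω)
    (hξne : ∀ θ ∈ Ω, ∀ α ∈ Set.Ioo (0:ℝ) 1, ξ θ α ≠ 0) :
    (∀ α ∈ Set.Ioo (0:ℝ) 1, ∀ π : ℝ → ℝ,
      ContDiffOn ℝ 1 π Ω → (∀ θ ∈ Ω, 0 < π θ) →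
      ((∀ θ ∈ Ω, deriv (fun θ' => (g θ')⁻¹ * ξ θ' α * π θ') θ = 0) ↔
        ∃ c : ℝ, c ≠ 0 ∧ ∀ θ ∈ Ω, π θ = c * g θ / ξ θ α)) ∧
    ((∃ π : ℝ → ℝ, ContDiffOn ℝ 1 π Ω ∧ (∀ θ ∈ Ω, 0 < π θ) ∧
        ∀ α ∈ Set.Ioo (0:ℝ) 1, ∀ θ ∈ Ω,
          deriv (fun θ' => (g θ')⁻¹ * ξ θ' α * π θ') θ = 0) ↔
      ∃ Q : ℝ → ℝ, ∃ R : ℝ → ℝ, ∀ θ ∈ Ω, ∀ α ∈ Set.Ioo (0:ℝ) 1,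
        ξ θ α = Q θ * R α) := by
  have hconv : Convex ℝ Ω := convex_iff_ordConnected.mpr hΩconn.ordConnected
  obtain ⟨θ₀, hθ₀⟩ := hΩne
  have hgd : ∀ θ ∈ Ω, DifferentiableAt ℝ g θ := fun θ hθ =>
    ((hgC1.differentiableOn one_ne_zero) θ hθ).differentiableAt (hΩopen.mem_nhds hθ)
  -- constancy of functions with zero derivative on Ω
  have hconst : ∀ (f : ℝ → ℝ), (∀ θ ∈ Ω, DifferentiableAt ℝ f θ) →
      (∀ θ ∈ Ω, deriv f θ = 0) → ∀ θ ∈ Ω, f θ = f θ₀ := by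
    intro f hdf hd0 θ hθ
    refine hconv.is_const_of_fderivWithin_eq_zero
      (fun x hx => (hdf x hx).differentiableWithinAt) (fun x hx => ?_) hθ hθ₀
    rw [fderivWithin_of_isOpen hΩopen hx]
    have h1 := (hdf x hx).hasDerivAt
    rw [hd0 x hx] at h1
    rw [h1.hasFDerivAt.fderiv]
    ext; simp
  -- differentiability of the combination
  have hdiff : ∀ α ∈ Set.Ioo (0:ℝ) 1, ∀ π : ℝ → ℝ, ContDiffOn ℝ 1 π Ω →
      ∀ θ ∈ Ω, DifferentiableAt ℝ (fun θ' => (g θ')⁻¹ * ξ θ' α * π θ') θ := by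
    intro α hα π hπ θ hθ
    have h1 : DifferentiableAt ℝ (fun θ' => ξ θ' α) θ :=
      (((hξC1 α hα).differentiableOn one_ne_zero) θ hθ).differentiableAt (hΩopen.mem_nhds hθ)
    have h2 : DifferentiableAt ℝ π θ :=
      ((hπ.differentiableOn one_ne_zero) θ hθ).differentiableAt (hΩopen.mem_nhds hθ)
    exact (((hgd θ hθ).inv (hgpos θ hθ).ne').mul h1).mul h2
  have part1 : ∀ α ∈ Set.Ioo (0:ℝ) 1, ∀ π : ℝ → ℝ,
      ContDiffOn ℝ 1 π Ω → (∀ θ ∈ Ω, 0 < π θ) →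
      ((∀ θ ∈ Ω, deriv (fun θ' => (g θ')⁻¹ * ξ θ' α * π θ') θ = 0) ↔
        ∃ c : ℝ, c ≠ 0 ∧ ∀ θ ∈ Ω, π θ = c * g θ / ξ θ α) := by
    intro α hα π hπC1 hπpos
    constructor
    · intro hder
      refine ⟨(g θ₀)⁻¹ * ξ θ₀ α * π θ₀, ?_, ?_⟩
      · exact mul_ne_zero (mul_ne_zero (inv_ne_zero (hgpos θ₀ hθ₀).ne')
          (hξne θ₀ hθ₀ α hα)) (hπpos θ₀ hθ₀).ne'
      · intro θ hθ
        have hc := hconst _ (hdiff α hα π hπC1) hder θ hθ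
        have hgne := (hgpos θ hθ).ne'
        have hξn := hξne θ hθ α hα
        have hg0ne := (hgpos θ₀ hθ₀).ne'
        rw [eq_div_iff hξn, ← hc]
        field_simp
    · rintro ⟨c, hc, hpi⟩ θ hθ
      have heq : (fun θ' => (g θ')⁻¹ * ξ θ' α * π θ') =ᶠ[nhds θ] fun _ => c := by
        filter_upwards [hΩopen.mem_nhds hθ] with x hx
        rw [hpi x hx]
        have := (hgpos x hx).ne'
        have := hξne x hx α hα
        field_simp
      rw [heq.deriv_eq, deriv_const]
  refine ⟨part1, ?_, ?_⟩
  · rintro ⟨π, hπC1, hπpos, hder⟩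
    refine ⟨fun θ => g θ / π θ, fun α => ξ θ₀ α * π θ₀ / g θ₀, ?_⟩
    intro θ hθ α hα
    have hc := hconst _ (hdiff α hα π hπC1) (hder α hα) θ hθ
    have hgne := (hgpos θ hθ).ne'
    have hπne := (hπpos θ hθ).ne'
    have hg0ne := (hgpos θ₀ hθ₀).ne'
    have hπ0ne := (hπpos θ₀ hθ₀).ne'
    field_simp at hc ⊢
    linear_combination hc
  · rintro ⟨Q, R, hQR⟩
    have hα₀ : (1/2 : ℝ) ∈ Set.Ioo (0:ℝ) 1 := by norm_num
    set α₀ : ℝ := 1/2 with hα₀def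
    -- sign constancy of ξ · α₀ on Ω
    have hsame : ∀ θ ∈ Ω, 0 < ξ θ₀ α₀ * ξ θ α₀ := by
      intro θ hθ
      rcases lt_trichotomy (ξ θ₀ α₀ * ξ θ α₀) 0 with h | h | h
      · exfalso
        have hcont : ContinuousOn (fun θ => ξ θ α₀) Ω := (hξC1 α₀ hα₀).continuousOn
        rcases mul_neg_iff.mp h with ⟨h1, h2⟩ | ⟨h1, h2⟩
        · obtain ⟨x, hx, hx0⟩ := hΩconn.intermediate_value hθ hθ₀ hcont
            (Set.mem_Icc.mpr ⟨h2.le, h1.le⟩)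
          exact hξne x hx α₀ hα₀ hx0
        · obtain ⟨x, hx, hx0⟩ := hΩconn.intermediate_value hθ₀ hθ hcont
            (Set.mem_Icc.mpr ⟨h1.le, h2.le⟩)
          exact hξne x hx α₀ hα₀ hx0
      · exact absurd (mul_eq_zero.mp h) (by
          push_neg
          exact ⟨hξne θ₀ hθ₀ α₀ hα₀, hξne θ hθ α₀ hα₀⟩)
      · exact h
    refine ⟨fun θ => ξ θ₀ α₀ * g θ / ξ θ α₀, ?_, ?_, ?_⟩
    · have : ContDiffOn ℝ 1 (fun θ => ξ θ₀ α₀ * (g θ / ξ θ α₀)) Ω :=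
        (hgC1.div (hξC1 α₀ hα₀) (fun θ hθ => hξne θ hθ α₀ hα₀)).const_smul (ξ θ₀ α₀)
      exact this.congr (fun θ _ => by ring)
    · intro θ hθ
      have hne := hξne θ hθ α₀ hα₀
      show 0 < ξ θ₀ α₀ * g θ / ξ θ α₀
      have : ξ θ₀ α₀ * g θ / ξ θ α₀ = (ξ θ₀ α₀ * ξ θ α₀) * g θ / (ξ θ α₀)^2 := by
        field_simp
      rw [this]
      exact div_pos (mul_pos (hsame θ hθ) (hgpos θ hθ)) (by positivity)
    · intro α hα θ hθ
      have hR0 : R α₀ ≠ 0 := by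
        intro h
        exact hξne θ₀ hθ₀ α₀ hα₀ (by rw [hQR θ₀ hθ₀ α₀ hα₀, h, mul_zero])
      have heq : (fun θ' => (g θ')⁻¹ * ξ θ' α * (ξ θ₀ α₀ * g θ' / ξ θ' α₀))
          =ᶠ[nhds θ] fun _ => ξ θ₀ α₀ * R α / R α₀ := by
        filter_upwards [hΩopen.mem_nhds hθ] with x hx
        have hgne := (hgpos x hx).ne'
        have hQne : Q x ≠ 0 := by
          intro h
          exact hξne x hx α₀ hα₀ (by rw [hQR x hx α₀ hα₀, h, zero_mul])
        rw [hQR x hx α hα, hQR x hx α₀ hα₀]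
        field_simp
      rw [heq.deriv_eq, deriv_const]
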